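/- For every input sequence σ, the cost of Harmonic Match with parameter K is at most the cost of Harmonic with parameter K+1, i.e., HM_K(σ) ≤ HA_{K+1}(σ). -/

import Mathlib

/-- One step of Next Fit: state is (number of bins opened so far, level of the open bin). -/
noncomputable def nfStep (s : ℕ × ℝ) (x : ℝ) : ℕ × ℝ :=
  if s.2 + x ≤ 1 then (s.1, s.2 + x) else (s.1 + 1, x)

/-- The number of bins Next Fit uses on the sequence `l`. -/
noncomputable def nfCost (l : List ℝ) : ℕ := (l.foldl nfStep (0, 2)).1

/-- Membership of an item `x` in class `i` (for `1 ≤ i ≤ K`) of the Harmonic-K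
algorithm: class `i < K` is `(1/(i+1), 1/i]` and class `K` is `(0, 1/K]`. -/
noncomputable def haMem (K i : ℕ) (x : ℝ) : Bool :=
  if i < K then decide (1 / ((i : ℝ) + 1) < x ∧ x ≤ 1 / (i : ℝ))
  else decide (x ≤ 1 / (K : ℝ))

/-- Harmonic-K packs the subsequence of each class with Next Fit; its cost is the
sum of the Next Fit costs over the classes. -/
noncomputable def haCost (K : ℕ) (l : List ℝ) : ℕ :=
  ∑ i ∈ Finset.Icc 1 K, nfCost (l.filter (haMem K i))

/-- The index (from 1 to K) of the class of Harmonic Match with parameter `K` that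
an item of size `x ∈ (0,1]` belongs to.  Class `i < K` is
`(1/(i+2), 1/(i+1)] ∪ (i/(i+1), (i+1)/(i+2)]` and class `K` is
`(0, 1/(K+1)] ∪ (K/(K+1), 1]`. -/
noncomputable def hmClassIdx (K : ℕ) (x : ℝ) : ℕ :=
  if x ≤ 1 / 2 then min K (⌊1 / x⌋.toNat - 1) else min K (⌈1 / (1 - x)⌉.toNat - 2)

/-- The state of Harmonic Match: the levels of the mature bins, and for each class
the large items still waiting for a companion and the level of the current Next-Fit
bin of small items of that class (initialized to `2`, so that the first such item
opens a bin), together with the number of bins opened so far. -/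
structure HMState where
  mature : List ℝ
  larges : ℕ → List ℝ
  lvl : ℕ → ℝ
  bins : ℕ

/-- One step of Harmonic Match with parameter `K`.  A large item opens a new bin in
its class.  A small item is first tried in the mature bins via Best Fit; otherwise
it is matched via Best Fit with the largest companion large item of its class (that
bin then becomes mature); otherwise it is packed by Next Fit with the other
unmatched small items of its class (a full Next-Fit bin becomes mature). -/
noncomputable def hmStep (K : ℕ) (s : HMState) (x : ℝ) : HMState :=
  let c := hmClassIdx K x
  if 1 / 2 < x then
    { s with larges := Function.update s.larges c (x :: s.larges c), bins := s.bins + 1 }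
  else
    match (s.mature.filter (fun m => decide (m + x ≤ 1))).max? with
    | some m => { s with mature := (m + x) :: s.mature.erase m }
    | none =>
      match ((s.larges c).filter (fun y => decide (y + x ≤ 1))).max? with
      | some y =>
          { s with larges := Function.update s.larges c ((s.larges c).erase y),
                   mature := (y + x) :: s.mature }
      | none =>
          if s.lvl c + x ≤ 1 then
            { s with lvl := Function.update s.lvl c (s.lvl c + x) }
          else
            { s with lvl := Function.update s.lvl c x,
                     mature := s.lvl c :: s.mature,
                     bins := s.bins + 1 }

/-- The number of bins Harmonic Match with parameter `K` uses on the sequence `l`. -/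
noncomputable def hmCost (K : ℕ) (l : List ℝ) : ℕ :=
  (l.foldl (hmStep K) ⟨[], fun _ => [], fun _ => 2, 0⟩).bins

/-! ### Auxiliary lemmas -/

/-- Domination between Next-Fit states: fewer bins, or the same number of bins and a
lower level.  Positivity of the levels is carried along. -/
def nfDom (a b : ℕ × ℝ) : Prop :=
  0 < a.2 ∧ 0 < b.2 ∧ (a.1 < b.1 ∨ (a.1 = b.1 ∧ a.2 ≤ b.2))

lemma nfDom_step_both {a b : ℕ × ℝ} {x : ℝ} (h : nfDom a b) (hx : 0 < x) :
    nfDom (nfStep a x) (nfStep b x) := by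
  obtain ⟨ha, hb, hab⟩ := h
  unfold nfStep
  split_ifs with h1 h2 h2 <;> dsimp only [nfDom]
  · refine ⟨by linarith, by linarith, ?_⟩
    rcases hab with h | ⟨h, h'⟩
    · exact Or.inl h
    · exact Or.inr ⟨h, by linarith⟩
  · refine ⟨by linarith, hx, Or.inl ?_⟩
    rcases hab with h | ⟨h, _⟩ <;> omega
  · rcases hab with h | ⟨h, h'⟩
    · refine ⟨hx, by linarith, ?_⟩
      rcases Nat.lt_or_ge (a.1 + 1) b.1 with h'' | h''
      · exact Or.inl h''
      · exact Or.inr ⟨by omega, by linarith⟩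
    · exact absurd h1 (by simp only [not_not]; linarith)
  · refine ⟨hx, hx, ?_⟩
    rcases hab with h | ⟨h, _⟩
    · exact Or.inl (by omega)
    · exact Or.inr ⟨by omega, le_rfl⟩

lemma nfDom_step_right {a b : ℕ × ℝ} {x : ℝ} (h : nfDom a b) (hx : 0 < x) :
    nfDom a (nfStep b x) := by
  obtain ⟨ha, hb, hab⟩ := h
  unfold nfStep
  split_ifs with h1 <;> dsimp only [nfDom]
  · refine ⟨ha, by linarith, ?_⟩
    rcases hab with h | ⟨h, h'⟩
    · exact Or.inl h
    · exact Or.inr ⟨h, by linarith⟩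
  · refine ⟨ha, hx, Or.inl ?_⟩
    rcases hab with h | ⟨h, _⟩ <;> omega

lemma nfDom_fst_le {a b : ℕ × ℝ} (h : nfDom a b) : a.1 ≤ b.1 := by
  rcases h.2.2 with h | ⟨h, _⟩ <;> omega

lemma nf_all_large : ∀ (u : List ℝ) (s : ℕ × ℝ), (∀ y ∈ u, (1:ℝ)/2 < y) → 1/2 < s.2 →
    (u.foldl nfStep s).1 = s.1 + u.length := by
  intro u
  induction u with
  | nil => intro s _ _; simp
  | cons y u ih =>
    intro s hu hs
    have hy : (1:ℝ)/2 < y := hu y (by simp)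
    have : nfStep s y = (s.1 + 1, y) := by
      unfold nfStep
      rw [if_neg (by push_neg; linarith)]
    rw [List.foldl_cons, this, ih _ (fun z hz => hu z (by simp [hz])) (by simpa using hy)]
    simp; omega

lemma aux1 {a x : ℝ} (ha : 0 < a) (hx : 0 < x) : x ≤ 1/a ↔ a ≤ 1/x := by
  rw [le_div_iff₀ ha, le_div_iff₀ hx, mul_comm]

lemma aux2 {a x : ℝ} (ha : 0 < a) (hx : 0 < x) : 1/a < x ↔ 1/x < a := by
  rw [div_lt_iff₀ ha, div_lt_iff₀ hx, mul_comm]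

lemma haMem_one {K : ℕ} (hK : 1 ≤ K) {x : ℝ} (hx1 : x ≤ 1) :
    (haMem (K+1) 1 x = true) ↔ (1:ℝ)/2 < x := by
  unfold haMem
  rw [if_pos (by omega : 1 < K+1)]
  simp only [Nat.cast_one, decide_eq_true_eq]
  norm_num
  exact fun _ => hx1

lemma idx_small_mem {K : ℕ} (hK : 1 ≤ K) {x : ℝ} (hx0 : 0 < x) (hx2 : x ≤ 1/2) :
    1 ≤ hmClassIdx K x ∧ hmClassIdx K x ≤ K := by
  have h2 : (2:ℝ) ≤ 1/x := by rw [le_div_iff₀ hx0]; linarith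
  have hfl : (2:ℤ) ≤ ⌊1/x⌋ := Int.le_floor.mpr (by exact_mod_cast h2)
  have hm2 : 2 ≤ ⌊1/x⌋.toNat := by omega
  simp only [hmClassIdx, if_pos hx2]
  omega

lemma haMem_succ_iff {K c : ℕ} (hK : 1 ≤ K) (hc1 : 1 ≤ c) (hc2 : c ≤ K) {x : ℝ}
    (hx0 : 0 < x) (hx1 : x ≤ 1) :
    (haMem (K+1) (c+1) x = true) ↔ (x ≤ 1/2 ∧ hmClassIdx K x = c) := by
  by_cases hx2 : x ≤ 1/2
  · have h2 : (2:ℝ) ≤ 1/x := by rw [le_div_iff₀ hx0]; linarith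
    have hfl : (2:ℤ) ≤ ⌊1/x⌋ := Int.le_floor.mpr (by exact_mod_cast h2)
    set m := ⌊1/x⌋.toNat with hm
    have hmz : ⌊1/x⌋ = (m : ℤ) := (Int.toNat_of_nonneg (by omega)).symm
    have hm2 : 2 ≤ m := by omega
    have hidx : hmClassIdx K x = min K (m - 1) := by simp only [hmClassIdx, if_pos hx2]; rfl
    rw [hidx]
    simp only [hx2, true_and]
    rcases Nat.lt_or_ge c K with hcK | hcK
    · unfold haMem
      rw [if_pos (by omega : c+1 < K+1)]
      simp only [decide_eq_true_eq]
      have hcast : ((c+1:ℕ):ℝ) = (c:ℝ)+1 := by push_cast; ring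
      rw [hcast]
      rw [show (c:ℝ)+1+1 = (c:ℝ)+2 by ring]
      rw [aux2 (by positivity) hx0, aux1 (by positivity) hx0]
      have e1 : ((c:ℝ)+1 ≤ 1/x) ↔ ((c:ℤ)+1 ≤ ⌊1/x⌋) := by
        rw [Int.le_floor]; push_cast; tauto
      have e2 : (1/x < (c:ℝ)+2) ↔ (⌊1/x⌋ < (c:ℤ)+2) := by
        rw [Int.floor_lt]; push_cast; tauto
      rw [e2, e1, hmz]
      constructor
      · rintro ⟨hb, ha⟩; omega
      · intro h; omega
    · have hcK' : c = K := by omega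
      subst hcK'
      unfold haMem
      rw [if_neg (lt_irrefl _)]
      simp only [decide_eq_true_eq]
      rw [show ((c+1:ℕ):ℝ) = (c:ℝ)+1 by push_cast; ring]
      rw [aux1 (by positivity) hx0]
      have e1 : ((c:ℝ)+1 ≤ 1/x) ↔ ((c:ℤ)+1 ≤ ⌊1/x⌋) := by
        rw [Int.le_floor]; push_cast; tauto
      rw [e1, hmz]
      constructor
      · intro h; omega
      · intro h; omega
  · simp only [hx2, false_and, iff_false]
    push_neg at hx2
    intro hmem
    have hle : x ≤ 1/((c:ℝ)+1) ∨ x ≤ 1/((K:ℝ)+1) := by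
      unfold haMem at hmem
      by_cases hc : c+1 < K+1
      · rw [if_pos hc] at hmem
        simp only [decide_eq_true_eq] at hmem
        left
        have : ((c+1:ℕ):ℝ) = (c:ℝ)+1 := by push_cast; ring
        rw [this] at hmem
        exact hmem.2
      · rw [if_neg hc] at hmem
        simp only [decide_eq_true_eq] at hmem
        right
        have : ((K+1:ℕ):ℝ) = (K:ℝ)+1 := by push_cast; ring
        rw [this] at hmem
        exact hmem
    have hc1' : (1:ℝ) ≤ (c:ℝ) := by exact_mod_cast hc1
    have hK1' : (1:ℝ) ≤ (K:ℝ) := by exact_mod_cast hK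
    have b1 : 1/((c:ℝ)+1) ≤ 1/2 := by
      rw [div_le_div_iff₀ (by linarith) (by norm_num)]; linarith
    have b2 : 1/((K:ℝ)+1) ≤ 1/2 := by
      rw [div_le_div_iff₀ (by linarith) (by norm_num)]; linarith
    rcases hle with h | h <;> linarith

lemma hmStep_large {K : ℕ} {s : HMState} {x : ℝ} (hx : (1:ℝ)/2 < x) :
    (hmStep K s x).lvl = s.lvl ∧ (hmStep K s x).bins = s.bins + 1 := by
  have hstep : hmStep K s x = { s with
      larges := Function.update s.larges (hmClassIdx K x) (x :: s.larges (hmClassIdx K x)),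
      bins := s.bins + 1 } := if_pos hx
  rw [hstep]
  exact ⟨rfl, rfl⟩

lemma hmStep_small_cases {K : ℕ} {s : HMState} {x : ℝ} (hx : ¬ ((1:ℝ)/2 < x)) :
    ((hmStep K s x).lvl = s.lvl ∧ (hmStep K s x).bins = s.bins) ∨
    (s.lvl (hmClassIdx K x) + x ≤ 1 ∧
      (hmStep K s x).lvl = Function.update s.lvl (hmClassIdx K x) (s.lvl (hmClassIdx K x) + x) ∧
      (hmStep K s x).bins = s.bins) ∨
    (¬ (s.lvl (hmClassIdx K x) + x ≤ 1) ∧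
      (hmStep K s x).lvl = Function.update s.lvl (hmClassIdx K x) x ∧
      (hmStep K s x).bins = s.bins + 1) := by
  simp only [hmStep, if_neg hx]
  rcases hmm : (s.mature.filter (fun m => decide (m + x ≤ 1))).max? with _ | m
  · rcases hml : ((s.larges (hmClassIdx K x)).filter (fun y => decide (y + x ≤ 1))).max? with _ | y
    · by_cases hfit : s.lvl (hmClassIdx K x) + x ≤ 1
      · exact Or.inr (Or.inl ⟨hfit, by simp [hfit], by simp [hfit]⟩)
      · exact Or.inr (Or.inr ⟨hfit, by simp [hfit], by simp [hfit]⟩)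
    · exact Or.inl ⟨by simp, by simp⟩
  · exact Or.inl ⟨by simp, by simp⟩

lemma key (K : ℕ) (hK : 1 ≤ K) :
    ∀ (l : List ℝ), (∀ y ∈ l, 0 < y ∧ y ≤ 1) →
    ∀ (s : HMState) (b : ℕ → ℕ) (L : ℕ) (g : ℕ → ℕ × ℝ),
    s.bins = L + ∑ c ∈ Finset.Icc 1 K, b c →
    (∀ c ∈ Finset.Icc 1 K, nfDom (b c, s.lvl c) (g c)) →
    ∃ b' : ℕ → ℕ,
      (l.foldl (hmStep K) s).bins
        = L + (l.filter (fun x => decide ((1:ℝ)/2 < x))).length + ∑ c ∈ Finset.Icc 1 K, b' c ∧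
      ∀ c ∈ Finset.Icc 1 K, nfDom (b' c, (l.foldl (hmStep K) s).lvl c)
        ((l.filter (fun x => haMem (K+1) (c+1) x)).foldl nfStep (g c)) := by
  intro l
  induction l with
  | nil =>
    intro _ s b L g hbins hdom
    exact ⟨b, by simpa using hbins, by simpa using hdom⟩
  | cons x l ih =>
    intro hl s b L g hbins hdom
    obtain ⟨hx0, hx1⟩ := hl x (by simp)
    have hl' : ∀ y ∈ l, 0 < y ∧ y ≤ 1 := fun y hy => hl y (by simp [hy])
    simp only [List.foldl_cons]
    by_cases hlx : (1:ℝ)/2 < x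
    · -- large item
      obtain ⟨hlvl, hb⟩ := hmStep_large (K := K) (s := s) hlx
      obtain ⟨b', h1, h2⟩ := ih hl' (hmStep K s x) b (L+1) g
        (by rw [hb, hbins]; omega)
        (by intro c hc; rw [hlvl]; exact hdom c hc)
      refine ⟨b', ?_, ?_⟩
      · rw [h1, List.filter_cons_of_pos (by simpa using hlx)]
        simp; omega
      · intro c hc
        obtain ⟨hc1, hc2⟩ := Finset.mem_Icc.mp hc
        have hmemF : haMem (K+1) (c+1) x = false := by
          rw [Bool.eq_false_iff]
          intro hmem
          exact absurd ((haMem_succ_iff hK hc1 hc2 hx0 hx1).mp hmem).1 (by linarith)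
        rw [List.filter_cons_of_neg (by simp [hmemF])]
        exact h2 c hc
    · -- small item
      have hx2 : x ≤ 1/2 := not_lt.mp hlx
      obtain ⟨hc01, hc02⟩ := idx_small_mem hK hx0 hx2
      set c₀ := hmClassIdx K x with hc₀
      have hc₀mem : c₀ ∈ Finset.Icc 1 K := Finset.mem_Icc.mpr ⟨hc01, hc02⟩
      set g' : ℕ → ℕ × ℝ := Function.update g c₀ (nfStep (g c₀) x) with hg'
      have hfilter : ∀ c ∈ Finset.Icc 1 K,
          ((x :: l).filter (fun y => haMem (K+1) (c+1) y)).foldl nfStep (g c)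
          = (l.filter (fun y => haMem (K+1) (c+1) y)).foldl nfStep (g' c) := by
        intro c hc
        obtain ⟨hc1, hc2⟩ := Finset.mem_Icc.mp hc
        by_cases hcc : c = c₀
        · subst hcc
          rw [List.filter_cons_of_pos
            (by simpa using (haMem_succ_iff hK hc1 hc2 hx0 hx1).mpr ⟨hx2, rfl⟩)]
          rw [List.foldl_cons]
          simp [hg', Function.update_self]
        · have hmemF : haMem (K+1) (c+1) x = false := by
            rw [Bool.eq_false_iff]
            intro hmem
            exact hcc (((haMem_succ_iff hK hc1 hc2 hx0 hx1).mp hmem).2.symm ▸ rfl)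
          rw [List.filter_cons_of_neg (by simp [hmemF])]
          rw [hg', Function.update_of_ne hcc]
      rcases hmStep_small_cases (K := K) (s := s) hlx with
        ⟨hlvl, hb⟩ | ⟨hfit, hlvl, hb⟩ | ⟨hov, hlvl, hb⟩
      · -- (lvl, bins) unchanged
        obtain ⟨b', h1, h2⟩ := ih hl' (hmStep K s x) b L g'
          (by rw [hb]; exact hbins)
          (by
            intro c hc
            rw [hlvl]
            by_cases hcc : c = c₀
            · subst hcc
              rw [hg', Function.update_self]
              exact nfDom_step_right (hdom _ hc) hx0
            · rw [hg', Function.update_of_ne hcc]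
              exact hdom c hc)
        refine ⟨b', ?_, ?_⟩
        · rw [h1, List.filter_cons_of_neg (by simpa using hlx)]
        · intro c hc
          rw [hfilter c hc]
          exact h2 c hc
      · -- Next Fit, item fits
        obtain ⟨b', h1, h2⟩ := ih hl' (hmStep K s x) b L g'
          (by rw [hb]; exact hbins)
          (by
            intro c hc
            rw [hlvl]
            by_cases hcc : c = c₀
            · subst hcc
              rw [Function.update_self, hg', Function.update_self]
              have : ((b c₀, s.lvl c₀ + x) : ℕ × ℝ) = nfStep (b c₀, s.lvl c₀) x := by
                simp [nfStep, hfit]; exact hfit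
              rw [this]
              exact nfDom_step_both (hdom _ hc) hx0
            · rw [Function.update_of_ne hcc, hg', Function.update_of_ne hcc]
              exact hdom c hc)
        refine ⟨b', ?_, ?_⟩
        · rw [h1, List.filter_cons_of_neg (by simpa using hlx)]
        · intro c hc
          rw [hfilter c hc]
          exact h2 c hc
      · -- Next Fit, new bin
        obtain ⟨b', h1, h2⟩ := ih hl' (hmStep K s x) (Function.update b c₀ (b c₀ + 1)) L g'
          (by
            rw [hb, hbins, Finset.sum_update_of_mem hc₀mem]
            rw [Finset.sdiff_singleton_eq_erase]
            have := Finset.add_sum_erase (Finset.Icc 1 K) b hc₀mem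
            omega)
          (by
            intro c hc
            rw [hlvl]
            by_cases hcc : c = c₀
            · subst hcc
              rw [Function.update_self, Function.update_self, hg', Function.update_self]
              have : ((b c₀ + 1, x) : ℕ × ℝ) = nfStep (b c₀, s.lvl c₀) x := by
                simp [nfStep, hov]; exact not_le.mp hov
              rw [this]
              exact nfDom_step_both (hdom _ hc) hx0
            · rw [Function.update_of_ne hcc, Function.update_of_ne hcc, hg',
                Function.update_of_ne hcc]
              exact hdom c hc)
        refine ⟨b', ?_, ?_⟩
        · rw [h1, List.filter_cons_of_neg (by simpa using hlx)]
        · intro c hc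
          rw [hfilter c hc]
          exact h2 c hc

/-- For every sequence of items in (0,1], the cost of Harmonic Match with parameter
`K` is at most the cost of Harmonic with parameter `K+1`. -/
theorem hm_le_ha (K : ℕ) (hK : 1 ≤ K) (l : List ℝ)
    (h : ∀ y ∈ l, 0 < y ∧ y ≤ 1) :
    hmCost K l ≤ haCost (K + 1) l := by
  obtain ⟨b', h1, h2⟩ := key K hK l h ⟨[], fun _ => [], fun _ => 2, 0⟩ (fun _ => 0) 0
    (fun _ => ((0:ℕ), (2:ℝ)))
    (by simp)
    (by intro c hc; exact ⟨by norm_num, by norm_num, Or.inr ⟨rfl, le_rfl⟩⟩)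
  have hcost : hmCost K l
      = (l.filter (fun x => decide ((1:ℝ)/2 < x))).length + ∑ c ∈ Finset.Icc 1 K, b' c := by
    rw [hmCost, h1]; omega
  -- class 1 of HA(K+1) consists exactly of the large items
  have hfilter1 : l.filter (haMem (K+1) 1) = l.filter (fun x => decide ((1:ℝ)/2 < x)) := by
    apply List.filter_congr
    intro y hy
    obtain ⟨hy0, hy1⟩ := h y hy
    by_cases hly : (1:ℝ)/2 < y
    · rw [decide_eq_true hly]
      exact (haMem_one hK hy1).mpr hly
    · rw [decide_eq_false hly]
      rw [Bool.eq_false_iff]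
      intro hmem
      exact hly ((haMem_one hK hy1).mp hmem)
  have hall : ∀ y ∈ l.filter (fun x => decide ((1:ℝ)/2 < x)), (1:ℝ)/2 < y := by
    intro y hy
    have := List.of_mem_filter hy
    simpa using this
  have hclass1 : nfCost (l.filter (haMem (K+1) 1))
      = (l.filter (fun x => decide ((1:ℝ)/2 < x))).length := by
    rw [hfilter1, nfCost, nf_all_large _ _ hall (by norm_num)]
    simp
  -- bound the per-class counts
  have hbound : ∀ c ∈ Finset.Icc 1 K, b' c ≤ nfCost (l.filter (haMem (K+1) (c+1))) := by
    intro c hc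
    have := nfDom_fst_le (h2 c hc)
    simpa [nfCost] using this
  have hsum : ∑ c ∈ Finset.Icc 1 K, b' c
      ≤ ∑ c ∈ Finset.Icc 1 K, nfCost (l.filter (haMem (K+1) (c+1))) :=
    Finset.sum_le_sum hbound
  -- reindex the sum
  have hreindex : ∑ i ∈ Finset.Icc 2 (K+1), nfCost (l.filter (haMem (K+1) i))
      = ∑ c ∈ Finset.Icc 1 K, nfCost (l.filter (haMem (K+1) (c+1))) := by
    rw [show Finset.Icc 2 (K+1) = (Finset.Icc 1 K).image (· + 1) by
      ext i
      simp only [Finset.mem_Icc, Finset.mem_image]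
      constructor
      · intro hi; exact ⟨i - 1, by omega, by omega⟩
      · rintro ⟨a, ha, rfl⟩; omega]
    rw [Finset.sum_image (by intro a _ b _ hab; simp only at hab; omega)]
  have hsplit : haCost (K+1) l
      = nfCost (l.filter (haMem (K+1) 1))
        + ∑ i ∈ Finset.Icc 2 (K+1), nfCost (l.filter (haMem (K+1) i)) := by
    rw [haCost, show Finset.Icc 1 (K+1) = insert 1 (Finset.Icc 2 (K+1)) by
      ext i; simp [Finset.mem_insert]; omega]
    rw [Finset.sum_insert (by simp)]
  rw [hcost, hsplit, hclass1, hreindex]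
  omega
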